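/- With 𝓔_n^0 and 𝓔_n^j as above (0 ≤ j ≤ n), the difference 𝓔_n^0(z) - 𝓔_n^j(z) = z^{n-j} 𝓟_j^0(z)/(𝓠_n^0(z) 𝓠_n^j(z)); in particular 𝓔_n^0 - 𝓔_n^j vanishes at the origin to order at least n - j. -/

import Mathlib

open Complex ComplexConjugate Polynomial

/-- The column vectors `[𝓟_n^j; 𝓠_n^j]` of the ordered `2×2` matrix products
`∏^←_{k=j}^{n-1} (1/ρ_k) [[z, conj a_k], [a_k z, 1]]` applied to `[0; 1]`;
the argument `m` stands for `n - j`. -/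
noncomputable def schurPQ (a : ℕ → ℂ) (j : ℕ) : ℕ → Polynomial ℂ × Polynomial ℂ
  | 0 => (0, 1)
  | m + 1 =>
    let pq := schurPQ a j m
    let k := j + m
    (((Real.sqrt (1 - ‖a k‖ ^ 2) : ℝ) : ℂ)⁻¹ •
        (Polynomial.X * pq.1 + Polynomial.C (conj (a k)) * pq.2),
     ((Real.sqrt (1 - ‖a k‖ ^ 2) : ℝ) : ℂ)⁻¹ •
        (Polynomial.C (a k) * Polynomial.X * pq.1 + pq.2))

/-- The rational functions `𝓔_n^j = 𝓟_n^j / 𝓠_n^j`; the argument `m` stands for `n - j`. -/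
noncomputable def schurE (a : ℕ → ℂ) (j m : ℕ) (z : ℂ) : ℂ :=
  (schurPQ a j m).1.eval z / (schurPQ a j m).2.eval z

/-- Normalizing constants are positive. -/
lemma schur_c_pos {a : ℂ} (ha : ‖a‖ < 1) : 0 < Real.sqrt (1 - ‖a‖ ^ 2) := by
  have : 0 < 1 - ‖a‖ ^ 2 := by nlinarith [norm_nonneg a]
  exact Real.sqrt_pos.mpr this

lemma schur_c_sq {a : ℂ} (ha : ‖a‖ < 1) :
    ((Real.sqrt (1 - ‖a‖ ^ 2) : ℝ) : ℂ) * ((Real.sqrt (1 - ‖a‖ ^ 2) : ℝ) : ℂ)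
      = 1 - (‖a‖ : ℂ) ^ 2 := by
  have h : 0 ≤ 1 - ‖a‖ ^ 2 := by nlinarith [norm_nonneg a]
  rw [← Complex.ofReal_mul, Real.mul_self_sqrt h]
  push_cast
  ring

lemma conj_mul_self (a : ℂ) : (conj a) * a = (‖a‖ : ℂ) ^ 2 := by
  rw [mul_comm, Complex.mul_conj, Complex.normSq_eq_norm_sq]
  push_cast
  rfl

/-- The determinant identity. -/
lemma schur_det (a : ℕ → ℂ) (ha : ∀ k, ‖a k‖ < 1) (j : ℕ) : ∀ m : ℕ,
    (schurPQ a 0 (j + m)).1 * (schurPQ a j m).2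
      - (schurPQ a 0 (j + m)).2 * (schurPQ a j m).1
      = Polynomial.X ^ m * (schurPQ a 0 j).1 := by
  intro m
  induction m with
  | zero => simp [schurPQ]
  | succ m ih =>
    have hadd : j + (m + 1) = (j + m) + 1 := rfl
    rw [hadd]
    show ((((Real.sqrt (1 - ‖a (0 + (j + m))‖ ^ 2) : ℝ) : ℂ)⁻¹ •
        (Polynomial.X * (schurPQ a 0 (j+m)).1
          + Polynomial.C (conj (a (0 + (j + m)))) * (schurPQ a 0 (j+m)).2)) *
        (((Real.sqrt (1 - ‖a (j + m)‖ ^ 2) : ℝ) : ℂ)⁻¹ •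
        (Polynomial.C (a (j + m)) * Polynomial.X * (schurPQ a j m).1 + (schurPQ a j m).2)))
      - ((((Real.sqrt (1 - ‖a (0 + (j + m))‖ ^ 2) : ℝ) : ℂ)⁻¹ •
        (Polynomial.C (a (0 + (j + m))) * Polynomial.X * (schurPQ a 0 (j+m)).1
          + (schurPQ a 0 (j+m)).2)) *
        (((Real.sqrt (1 - ‖a (j + m)‖ ^ 2) : ℝ) : ℂ)⁻¹ •
        (Polynomial.X * (schurPQ a j m).1 + Polynomial.C (conj (a (j + m))) * (schurPQ a j m).2)))
      = Polynomial.X ^ (m + 1) * (schurPQ a 0 j).1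
    have h0 : (0 : ℕ) + (j + m) = j + m := Nat.zero_add _
    rw [h0]
    set c := ((Real.sqrt (1 - ‖a (j + m)‖ ^ 2) : ℝ) : ℂ) with hc
    set P := (schurPQ a 0 (j+m)).1
    set Q := (schurPQ a 0 (j+m)).2
    set p := (schurPQ a j m).1
    set q := (schurPQ a j m).2
    have hcne : c ≠ 0 := by
      simp only [hc, ne_eq, Complex.ofReal_eq_zero]
      exact (schur_c_pos (ha (j+m))).ne'
    have hkey : (Polynomial.C (conj (a (j+m)))) * (Polynomial.C (a (j+m)))
        = Polynomial.C ((‖a (j+m)‖ : ℂ) ^ 2) := by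
      rw [← Polynomial.C_mul, conj_mul_self]
    have hcsq : c * c = 1 - (‖a (j+m)‖ : ℂ) ^ 2 := schur_c_sq (ha (j+m))
    have expand :
        (Polynomial.X * P + Polynomial.C (conj (a (j+m))) * Q) *
          (Polynomial.C (a (j+m)) * Polynomial.X * p + q)
        - (Polynomial.C (a (j+m)) * Polynomial.X * P + Q) *
          (Polynomial.X * p + Polynomial.C (conj (a (j+m))) * q)
        = (1 - Polynomial.C ((‖a (j+m)‖ : ℂ) ^ 2)) * (Polynomial.X * (P * q - Q * p)) := by
      linear_combination (-(Polynomial.X * (P * q - Q * p))) * hkey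
    have hone : (c⁻¹ * c⁻¹) * (1 - (‖a (j + m)‖ : ℂ) ^ 2) = 1 := by
      rw [← hcsq]; field_simp
    have h2 : Polynomial.C (c⁻¹ * c⁻¹) * (1 - Polynomial.C ((‖a (j + m)‖ : ℂ) ^ 2)) = 1 := by
      rw [show (1 : ℂ[X]) - Polynomial.C ((‖a (j + m)‖ : ℂ) ^ 2)
          = Polynomial.C (1 - (‖a (j + m)‖ : ℂ) ^ 2) by simp,
        ← Polynomial.C_mul, hone, Polynomial.C_1]
    rw [smul_mul_smul_comm, smul_mul_smul_comm, ← smul_sub, expand,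
      Polynomial.smul_eq_C_mul, ← mul_assoc, h2, one_mul, ih]
    ring


lemma step_ineq (b u v : ℂ) (hb : ‖b‖ ≤ 1) (h : ‖u‖ ≤ ‖v‖) :
    ‖u + conj b * v‖ ≤ ‖b * u + v‖ := by
  have e1 : Complex.normSq (u + conj b * v)
      = Complex.normSq u + Complex.normSq b * Complex.normSq v
        + 2 * (u * (b * conj v)).re := by
    rw [Complex.normSq_add, Complex.normSq_mul, Complex.normSq_conj, map_mul,
      Complex.conj_conj]
  have e2 : Complex.normSq (b * u + v)
      = Complex.normSq b * Complex.normSq u + Complex.normSq v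
        + 2 * (u * (b * conj v)).re := by
    rw [Complex.normSq_add, Complex.normSq_mul]
    ring_nf
  have hb2 : Complex.normSq b ≤ 1 := by
    rw [Complex.normSq_eq_norm_sq]
    nlinarith [norm_nonneg b]
  have hu2 : Complex.normSq u ≤ Complex.normSq v := by
    rw [Complex.normSq_eq_norm_sq, Complex.normSq_eq_norm_sq]
    nlinarith [norm_nonneg u, norm_nonneg v]
  have h1 : Complex.normSq (u + conj b * v) ≤ Complex.normSq (b * u + v) := by
    rw [e1, e2]; nlinarith [Complex.normSq_nonneg b, Complex.normSq_nonneg u,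
      Complex.normSq_nonneg v]
  rw [Complex.norm_def, Complex.norm_def]
  exact Real.sqrt_le_sqrt h1

/-- The key bound: `‖𝓟‖ ≤ ‖𝓠‖` and `𝓠 ≠ 0` on the closed unit disc. -/
lemma schur_bound (a : ℕ → ℂ) (ha : ∀ k, ‖a k‖ < 1) (j : ℕ) : ∀ m : ℕ, ∀ z : ℂ, ‖z‖ ≤ 1 →
    ‖(schurPQ a j m).1.eval z‖ ≤ ‖(schurPQ a j m).2.eval z‖
      ∧ (schurPQ a j m).2.eval z ≠ 0 := by
  intro m
  induction m with
  | zero => intro z hz; simp [schurPQ]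
  | succ m ih =>
    intro z hz
    obtain ⟨ihle, ihne⟩ := ih z hz
    set P := (schurPQ a j m).1
    set Q := (schurPQ a j m).2
    set b := a (j + m) with hbdef
    have hb : ‖b‖ < 1 := ha (j + m)
    set c := ((Real.sqrt (1 - ‖b‖ ^ 2) : ℝ) : ℂ) with hc
    have hcne : c ≠ 0 := by
      simp only [hc, ne_eq, Complex.ofReal_eq_zero]
      exact (schur_c_pos hb).ne'
    have h1 : (schurPQ a j (m+1)).1.eval z
        = c⁻¹ * (z * P.eval z + conj b * Q.eval z) := by
      show (c⁻¹ • (Polynomial.X * P + Polynomial.C (conj b) * Q)).eval z = _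
      simp [Polynomial.eval_smul, smul_eq_mul]
      ring
    have h2 : (schurPQ a j (m+1)).2.eval z
        = c⁻¹ * (b * (z * P.eval z) + Q.eval z) := by
      show (c⁻¹ • (Polynomial.C b * Polynomial.X * P + Q)).eval z = _
      simp [Polynomial.eval_smul, smul_eq_mul]
      ring
    set u := z * P.eval z with hu
    set v := Q.eval z with hv
    have huv : ‖u‖ ≤ ‖v‖ := by
      rw [hu, norm_mul]
      calc ‖z‖ * ‖P.eval z‖ ≤ 1 * ‖Q.eval z‖ := by
            apply mul_le_mul hz ihle (norm_nonneg _) zero_le_one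
        _ = ‖v‖ := by rw [one_mul]
    have hvpos : 0 < ‖v‖ := norm_pos_iff.mpr ihne
    have hne2 : b * u + v ≠ 0 := by
      intro hcon
      have htri : ‖v‖ ≤ ‖b * u + v‖ + ‖b * u‖ := by
        have := norm_sub_le (b * u + v) (b * u)
        simpa using this
      rw [hcon, norm_zero, zero_add, norm_mul] at htri
      nlinarith [mul_le_mul_of_nonneg_left huv (norm_nonneg b),
        mul_lt_mul_of_pos_right hb hvpos]
    constructor
    · rw [h1, h2, norm_mul, norm_mul]
      exact mul_le_mul_of_nonneg_left (step_ineq b u v hb.le huv) (norm_nonneg _)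
    · rw [h2]
      exact mul_ne_zero (inv_ne_zero hcne) hne2

theorem stmt12 (a : ℕ → ℂ) (ha : ∀ k, ‖a k‖ < 1) (j n : ℕ) (hjn : j ≤ n) :
    (∀ z : ℂ, ‖z‖ ≤ 1 →
      schurE a 0 n z - schurE a j (n - j) z =
        z ^ (n - j) * ((schurPQ a 0 j).1.eval z) /
          (((schurPQ a 0 n).2.eval z) * ((schurPQ a j (n - j)).2.eval z))) ∧
    ∃ g : ℂ → ℂ, AnalyticAt ℂ g 0 ∧
      ∀ᶠ z in nhds (0 : ℂ), schurE a 0 n z - schurE a j (n - j) z = z ^ (n - j) * g z := by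
  have hn : j + (n - j) = n := Nat.add_sub_cancel' hjn
  have part1 : ∀ z : ℂ, ‖z‖ ≤ 1 →
      schurE a 0 n z - schurE a j (n - j) z =
        z ^ (n - j) * ((schurPQ a 0 j).1.eval z) /
          (((schurPQ a 0 n).2.eval z) * ((schurPQ a j (n - j)).2.eval z)) := by
    intro z hz
    have hQ0 : (schurPQ a 0 n).2.eval z ≠ 0 := (schur_bound a ha 0 n z hz).2
    have hQj : (schurPQ a j (n - j)).2.eval z ≠ 0 := (schur_bound a ha j (n - j) z hz).2
    have hdet := congrArg (Polynomial.eval z) (schur_det a ha j (n - j))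
    rw [hn] at hdet
    simp only [Polynomial.eval_sub, Polynomial.eval_mul, Polynomial.eval_pow,
      Polynomial.eval_X] at hdet
    unfold schurE
    rw [div_sub_div _ _ hQ0 hQj, hdet]
  refine ⟨part1, ?_⟩
  refine ⟨fun z => (schurPQ a 0 j).1.eval z /
      (((schurPQ a 0 n).2.eval z) * ((schurPQ a j (n - j)).2.eval z)), ?_, ?_⟩
  · have hz0 : ‖(0 : ℂ)‖ ≤ 1 := by simp
    have hQ0 : (schurPQ a 0 n).2.eval 0 ≠ 0 := (schur_bound a ha 0 n 0 hz0).2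
    have hQj : (schurPQ a j (n - j)).2.eval 0 ≠ 0 := (schur_bound a ha j (n - j) 0 hz0).2
    have h1 : AnalyticAt ℂ (fun z : ℂ => (schurPQ a 0 j).1.eval z) 0 := by
      simpa using (AnalyticOnNhd.eval_polynomial (𝕜 := ℂ) (schurPQ a 0 j).1) 0 (Set.mem_univ 0)
    have h2 : AnalyticAt ℂ (fun z : ℂ => (schurPQ a 0 n).2.eval z) 0 := by
      simpa using (AnalyticOnNhd.eval_polynomial (𝕜 := ℂ) (schurPQ a 0 n).2) 0 (Set.mem_univ 0)
    have h3 : AnalyticAt ℂ (fun z : ℂ => (schurPQ a j (n - j)).2.eval z) 0 := by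
      simpa using (AnalyticOnNhd.eval_polynomial (𝕜 := ℂ) (schurPQ a j (n - j)).2) 0
        (Set.mem_univ 0)
    exact h1.div (h2.mul h3) (mul_ne_zero hQ0 hQj)
  · filter_upwards [Metric.closedBall_mem_nhds (0 : ℂ) one_pos] with z hz
    have hz' : ‖z‖ ≤ 1 := by simpa [Metric.mem_closedBall, dist_zero_right] using hz
    rw [part1 z hz', mul_div_assoc]
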